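/- In the Game of Information Ownership as given, Alice strictly prefers not to share her secret: her expected payoff at the equilibrium (a?T:B, b?N:F, c?L:R) without sharing is 6, while if she shares with Bob, Bob can force the equilibrium (M,I,C) (by forwarding a to Carol) where Alice's payoff is only 2. -/

import Mathlib

inductive ACh | T | M | B
  deriving DecidableEq
instance : Fintype ACh := ⟨{.T, .M, .B}, fun x => by cases x <;> decide⟩
inductive BCh | N | I | F
  deriving DecidableEq
instance : Fintype BCh := ⟨{.N, .I, .F}, fun x => by cases x <;> decide⟩
inductive CCh | L | Cc | R
  deriving DecidableEq
instance : Fintype CCh := ⟨{.L, .Cc, .R}, fun x => by cases x <;> decide⟩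

def gACa : ACh → CCh → ℚ
  | .T, .L => 10
  | .T, .Cc => 0
  | .T, .R => 0
  | .M, .L => 2
  | .M, .Cc => 2
  | .M, .R => 2
  | .B, .L => 0
  | .B, .Cc => 0
  | .B, .R => 10

def gACc : ACh → CCh → ℚ
  | .T, .L => 0
  | .T, .Cc => 2
  | .T, .R => 10
  | .M, .L => 0
  | .M, .Cc => 2
  | .M, .R => 0
  | .B, .L => 10
  | .B, .Cc => 2
  | .B, .R => 0

def gABa : ACh → BCh → ℚ
  | .T, .N => 2
  | .T, .I => 0
  | .T, .F => 0
  | .M, .N => 0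
  | .M, .I => 0
  | .M, .F => 0
  | .B, .N => 0
  | .B, .I => 0
  | .B, .F => 2

def gABb : ACh → BCh → ℚ
  | .T, .N => 2
  | .T, .I => 0
  | .T, .F => 0
  | .M, .N => 0
  | .M, .I => 0
  | .M, .F => 0
  | .B, .N => 0
  | .B, .I => 0
  | .B, .F => 2

def gBCb : BCh → CCh → ℚ
  | .N, .L => 0
  | .N, .Cc => 0
  | .N, .R => 0
  | .I, .L => 0
  | .I, .Cc => 10
  | .I, .R => 0
  | .F, .L => 0
  | .F, .Cc => 0
  | .F, .R => 0

def gBCc : BCh → CCh → ℚ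
  | .N, .L => 0
  | .N, .Cc => 0
  | .N, .R => 0
  | .I, .L => 0
  | .I, .Cc => 0
  | .I, .R => 0
  | .F, .L => 0
  | .F, .Cc => 0
  | .F, .R => 0

def uA (x : ACh) (y : BCh) (z : CCh) : ℚ := gACa x z + gABa x y
def uB (x : ACh) (y : BCh) (z : CCh) : ℚ := gABb x y + gBCb y z
def uC (x : ACh) (y : BCh) (z : CCh) : ℚ := gACc x z + gBCc y z

-- each player knows only their own secret
def EUk (u : ACh → BCh → CCh → ℚ)
    (sA : Bool → ACh) (sB : Bool → BCh) (sC : Bool → CCh) : ℚ :=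
  (∑ a : Bool, ∑ b : Bool, ∑ c : Bool, u (sA a) (sB b) (sC c)) / 8

def NashK (sA : Bool → ACh) (sB : Bool → BCh) (sC : Bool → CCh) : Prop :=
  (∀ sA', EUk uA sA' sB sC ≤ EUk uA sA sB sC) ∧
  (∀ sB', EUk uB sA sB' sC ≤ EUk uB sA sB sC) ∧
  (∀ sC', EUk uC sA sB sC' ≤ EUk uC sA sB sC)

-- a shared: Bob knows (a,b), Carol knows (a,c)
def EUs (u : ACh → BCh → CCh → ℚ)
    (sA : Bool → ACh) (sB : Bool → Bool → BCh) (sC : Bool → Bool → CCh) : ℚ :=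
  (∑ a : Bool, ∑ b : Bool, ∑ c : Bool, u (sA a) (sB a b) (sC a c)) / 8

def NashS (sA : Bool → ACh) (sB : Bool → Bool → BCh) (sC : Bool → Bool → CCh) : Prop :=
  (∀ sA', EUs uA sA' sB sC ≤ EUs uA sA sB sC) ∧
  (∀ sB', EUs uB sA sB' sC ≤ EUs uB sA sB sC) ∧
  (∀ sC', EUs uC sA sB sC' ≤ EUs uC sA sB sC)

def sAstar : Bool → ACh := fun a => if a then .T else .B
def sBstar : Bool → BCh := fun b => if b then .N else .F
def sCstar : Bool → CCh := fun c => if c then .L else .R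

set_option maxHeartbeats 2000000 in
/-- Game of Information Ownership: not sharing gives Alice 6 at the equilibrium
(a?T:B, b?N:F, c?L:R); if she shares, Bob can force (M,I,C) where Alice gets only 2. -/
theorem ownership_no_sharing :
    NashK sAstar sBstar sCstar ∧
    EUk uA sAstar sBstar sCstar = 6 ∧
    NashS (fun _ => .M) (fun _ _ => .I) (fun _ _ => .Cc) ∧
    EUs uA (fun _ => .M) (fun _ _ => .I) (fun _ _ => .Cc) = 2 ∧
    (2 : ℚ) < 6 := by
  have key : ∀ P, P = True → P := by intro P h; rw [h]; trivial
  refine ⟨⟨?_, ?_, ?_⟩, ?_, ⟨?_, ?_, ?_⟩, ?_, by norm_num⟩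
  · intro s
    cases h1 : s true <;> cases h0 : s false <;>
      simp [EUk, sAstar, sBstar, sCstar, uA, gACa, gABa, Fintype.sum_bool, h1, h0] <;> norm_num
  · intro s
    cases h1 : s true <;> cases h0 : s false <;>
      simp [EUk, sAstar, sBstar, sCstar, uB, gABb, gBCb, Fintype.sum_bool, h1, h0] <;> norm_num
  · intro s
    cases h1 : s true <;> cases h0 : s false <;>
      simp [EUk, sAstar, sBstar, sCstar, uC, gACc, gBCc, Fintype.sum_bool, h1, h0] <;> norm_num
  · simp [EUk, sAstar, sBstar, sCstar, uA, gACa, gABa, Fintype.sum_bool]; norm_num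
  · intro s
    cases h1 : s true <;> cases h0 : s false <;>
      simp [EUs, uA, gACa, gABa, Fintype.sum_bool, h1, h0] <;> norm_num
  · intro s
    cases h11 : s true true <;> cases h10 : s true false <;>
      cases h01 : s false true <;> cases h00 : s false false <;>
      simp [EUs, uB, gABb, gBCb, Fintype.sum_bool, h11, h10, h01, h00] <;> norm_num
  · intro s
    cases h11 : s true true <;> cases h10 : s true false <;>
      cases h01 : s false true <;> cases h00 : s false false <;>
      simp [EUs, uC, gACc, gBCc, Fintype.sum_bool, h11, h10, h01, h00] <;> norm_num
  · simp [EUs, uA, gACa, gABa, Fintype.sum_bool]; norm_num
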